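/- Let a, b, n ∈ ℕ with a + b ≤ n, let ε ≥ 0, and let U be a 2^n × 2^n unitary. If there exists an (a,b)-block-diagonal unitary V with ∥U − V∥_op ≤ ε, then ∥U − Π_{𝒲_{a,b}}(U)∥_op ≤ 2ε. -/

import Mathlib

open scoped Kronecker Classical Matrix

namespace PauliSpec

/-- The field 𝔽₂. -/
abbrev F2 := ZMod 2

/-- The phase space 𝔽₂^{2n}, identified with pairs `(xX, xZ) ∈ 𝔽₂^n × 𝔽₂^n`. -/
abbrev PhS (n : ℕ) := (Fin n → F2) × (Fin n → F2)

/-- Index type for `n`-qubit matrices: ℂ^{2^n} ≅ ⊗_{j=1}^n ℂ². -/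
abbrev QIdx (n : ℕ) := Fin n → Fin 2

/-- The 2×2 Pauli X matrix. -/
def PauliX : Matrix (Fin 2) (Fin 2) ℂ := !![0, 1; 1, 0]

/-- The 2×2 Pauli Y matrix. -/
def PauliY : Matrix (Fin 2) (Fin 2) ℂ := !![0, -Complex.I; Complex.I, 0]

/-- The 2×2 Pauli Z matrix. -/
def PauliZ : Matrix (Fin 2) (Fin 2) ℂ := !![1, 0; 0, -1]

/-- The Weyl operator `W_x := i^{xX·xZ} ⊗_j (X^{xX_j} Z^{xZ_j})`, written entrywise:
the `(u, v)` entry of the `n`-fold Kronecker product of matrices `M_j` is `∏_j (M_j)_{u_j v_j}`. -/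
noncomputable def Weyl {n : ℕ} (x : PhS n) : Matrix (QIdx n) (QIdx n) ℂ :=
  fun u v =>
    (Complex.I ^ (∑ j, (x.1 j).val * (x.2 j).val)) *
      ∏ j, (PauliX ^ (x.1 j).val * PauliZ ^ (x.2 j).val) (u j) (v j)

/-- The symplectic product `[x,y] := ∑_j (xX_j·yZ_j + xZ_j·yX_j) ∈ 𝔽₂`. -/
def sympl {n : ℕ} (x y : PhS n) : F2 :=
  ∑ j, (x.1 j * y.2 j + x.2 j * y.1 j)

lemma sympl_add_left {n : ℕ} (x y z : PhS n) :
    sympl (x + y) z = sympl x z + sympl y z := by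
  simp only [sympl, Prod.fst_add, Prod.snd_add, Pi.add_apply, add_mul]
  rw [← Finset.sum_add_distrib]
  exact Finset.sum_congr rfl fun j _ => by ring

lemma sympl_smul_left {n : ℕ} (c : F2) (x z : PhS n) :
    sympl (c • x) z = c * sympl x z := by
  simp only [sympl, Prod.smul_fst, Prod.smul_snd, Pi.smul_apply, smul_eq_mul, Finset.mul_sum]
  exact Finset.sum_congr rfl fun j _ => by ring

/-- The symplectic complement `S^⊥ := {x : [x,y] = 0 for all y ∈ S}`. -/
def symplComplement {n : ℕ} (S : Submodule F2 (PhS n)) : Submodule F2 (PhS n) where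
  carrier := {x | ∀ y ∈ S, sympl x y = 0}
  add_mem' := by
    intro a b ha hb y hy
    rw [sympl_add_left, ha y hy, hb y hy, add_zero]
  zero_mem' := by
    intro y hy
    simp [sympl]
  smul_mem' := by
    intro c x hx y hy
    rw [sympl_smul_left, hx y hy, mul_zero]

/-- The Pauli support `supp(A) := {x : tr(W_x·A) ≠ 0}`. -/
noncomputable def pauliSupport {n : ℕ} (A : Matrix (QIdx n) (QIdx n) ℂ) : Set (PhS n) :=
  {x | (Weyl x * A).trace ≠ 0}

/-- The Pauli projection `Π_S(A) := 2^{−n} ∑_{x∈S} tr(A·W_x)·W_x`. -/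
noncomputable def pauliProj {n : ℕ} (S : Set (PhS n)) (A : Matrix (QIdx n) (QIdx n) ℂ) :
    Matrix (QIdx n) (QIdx n) ℂ :=
  (2 ^ n : ℂ)⁻¹ • ∑ᶠ x ∈ S, (A * Weyl x).trace • Weyl x

/-- The subspace `𝒲_{a,b} ⊆ 𝔽₂^{2n}`: `xX_j = 0` on the first `n−a` coordinates and
`xZ_j = 0` on the first `n−a−b` coordinates. -/
def Wab (n a b : ℕ) : Submodule F2 (PhS n) where
  carrier := {x | (∀ j : Fin n, (j : ℕ) < n - a → x.1 j = 0) ∧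
    ∀ j : Fin n, (j : ℕ) < n - a - b → x.2 j = 0}
  add_mem' := by
    rintro x y ⟨hx1, hx2⟩ ⟨hy1, hy2⟩
    refine ⟨fun j hj => ?_, fun j hj => ?_⟩
    · simp [Prod.fst_add, Pi.add_apply, hx1 j hj, hy1 j hj]
    · simp [Prod.snd_add, Pi.add_apply, hx2 j hj, hy2 j hj]
  zero_mem' := ⟨fun j _ => rfl, fun j _ => rfl⟩
  smul_mem' := by
    rintro c x ⟨hx1, hx2⟩
    refine ⟨fun j hj => ?_, fun j hj => ?_⟩
    · simp [Prod.smul_fst, Pi.smul_apply, hx1 j hj]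
    · simp [Prod.smul_snd, Pi.smul_apply, hx2 j hj]

/-- `A` is `(a,b)`-block-diagonal: under ℂ^{2^n} ≅ ℂ^{2^{n−a−b}} ⊗ ℂ^{2^b} ⊗ ℂ^{2^a},
`A = I ⊗ (∑_{y∈{0,1}^b} |y⟩⟨y| ⊗ A_y)`.  Entrywise: `A u v = 0` unless `u, v` agree on the
first `n−a` coordinates, and then the entry is `A_{u₂}(u₃, v₃)` where `u₂` is the middle `b`
coordinates and `u₃, v₃` the last `a` coordinates. -/
def IsBlockDiag {n : ℕ} (a b : ℕ) (hab : a + b ≤ n)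
    (A : Matrix (QIdx n) (QIdx n) ℂ) : Prop :=
  ∃ M : (Fin b → Fin 2) → Matrix (Fin a → Fin 2) (Fin a → Fin 2) ℂ,
    ∀ u v : QIdx n,
      A u v =
        if ∀ j : Fin n, (j : ℕ) < n - a → u j = v j then
          M (fun i => u ⟨n - a - b + i.1, by have := i.2; omega⟩)
            (fun i => u ⟨n - a + i.1, by have := i.2; omega⟩)
            (fun i => v ⟨n - a + i.1, by have := i.2; omega⟩)
        else 0

/-- The ℓ² → ℓ² operator norm of a complex matrix. -/
noncomputable def l2OpNorm {ι κ : Type*} [Fintype ι] [Fintype κ] [DecidableEq κ]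
    (A : Matrix ι κ ℂ) : ℝ :=
  ‖LinearMap.toContinuousLinearMap (Matrix.toEuclideanLin A)‖

/-- `C` is a Clifford unitary: it is unitary and conjugates every Weyl operator to a
signed Weyl operator. -/
def IsCliffordUnitary {n : ℕ} (C : Matrix (QIdx n) (QIdx n) ℂ) : Prop :=
  C ∈ Matrix.unitaryGroup (QIdx n) ℂ ∧
    ∀ x : PhS n, ∃ (y : PhS n) (s : ℂ), (s = 1 ∨ s = -1) ∧ C * Weyl x * Cᴴ = s • Weyl y

/-- `C T C† := {y : ∃ x ∈ T, C·W_x·C† = ±W_y}`. -/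
def conjSet {n : ℕ} (C : Matrix (QIdx n) (QIdx n) ℂ) (T : Set (PhS n)) : Set (PhS n) :=
  {y | ∃ x ∈ T, ∃ s : ℂ, (s = 1 ∨ s = -1) ∧ C * Weyl x * Cᴴ = s • Weyl y}

/-- The matrix acting as the 2×2 matrix `P` on qubit `i` and as the identity elsewhere:
`P_i := I^{⊗(i−1)} ⊗ P ⊗ I^{⊗(n−i)}`. -/
def onQubit {n : ℕ} (P : Matrix (Fin 2) (Fin 2) ℂ) (i : Fin n) :
    Matrix (QIdx n) (QIdx n) ℂ :=
  fun u v => if ∀ j : Fin n, j ≠ i → u j = v j then P (u i) (v i) else 0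

/-- The unitary on `2n` qubits exchanging the `i`-th qubit of the first group of `n`
qubits with the `i`-th qubit of the second group. -/
def swapQubit {n : ℕ} (i : Fin n) :
    Matrix (QIdx n × QIdx n) (QIdx n × QIdx n) ℂ :=
  fun p q =>
    if p.1 = Function.update q.1 i (q.2 i) ∧ p.2 = Function.update q.2 i (q.1 i) then 1 else 0

/-! ### Auxiliary machinery for `stmt8` -/

section Stmt8Aux

/-- Flip a bit `v : Fin 2` iff `c = 1`. -/
def bflip (c : F2) (v : Fin 2) : Fin 2 := if c = 0 then v else (if v = 0 then 1 else 0)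

/-- The bit-difference of `u v : Fin 2` as an element of `F2`. -/
def bdiff (u v : Fin 2) : F2 := if u = v then 0 else 1

/-- Sign `(-1)^(c·v)`. -/
noncomputable def zsgn (c : F2) (v : Fin 2) : ℂ := if c = 0 ∨ v = 0 then 1 else -1

lemma bflip_eq_iff (c : F2) (u v : Fin 2) : bflip c v = u ↔ c = bdiff u v := by
  revert c u v; decide

lemma bflip_bdiff (u v : Fin 2) : bflip (bdiff u v) v = u := by revert u v; decide

lemma bflip_bdiff' (u v : Fin 2) : bflip (bdiff u v) u = v := by revert u v; decide

lemma bdiff_bflip (s : F2) (u : Fin 2) : bdiff (bflip s u) u = s := by revert s u; decide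

lemma bflip_zero (v : Fin 2) : bflip 0 v = v := rfl

lemma bflip_involutive (c : F2) (v : Fin 2) : bflip c (bflip c v) = v := by revert c v; decide

lemma zsgn_zero (v : Fin 2) : zsgn 0 v = 1 := by simp [zsgn]

lemma zsgn_mul_self (c : F2) (v : Fin 2) : zsgn c v * zsgn c v = 1 := by
  unfold zsgn; split <;> norm_num

lemma F2_univ : (Finset.univ : Finset F2) = {0, 1} := by decide

lemma F2_sum (f : F2 → ℂ) : ∑ c : F2, f c = f 0 + f 1 := by
  rw [F2_univ, Finset.sum_pair (by decide : (0 : F2) ≠ 1)]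

/-- Single-qubit Pauli entry formula. -/
lemma pauli_entry (c d : F2) (u v : Fin 2) :
    (PauliX ^ (ZMod.val c) * PauliZ ^ (ZMod.val d)) u v
      = (if u = bflip c v then 1 else 0) * zsgn d v := by
  rcases (by revert c; decide : ∀ c : F2, c = 0 ∨ c = 1) c with rfl | rfl <;>
  rcases (by revert d; decide : ∀ c : F2, c = 0 ∨ c = 1) d with rfl | rfl <;>
  rcases (by decide : ∀ c : Fin 2, c = 0 ∨ c = 1) u with rfl | rfl <;>
  rcases (by decide : ∀ c : Fin 2, c = 0 ∨ c = 1) v with rfl | rfl <;>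
    simp [PauliX, PauliZ, bflip, zsgn, Matrix.mul_apply, Fin.sum_univ_two, ZMod.val_zero,
      ZMod.val_one] <;>
    norm_num

end Stmt8Aux

section Stmt8Aux2

/-- Entrywise formula for the Weyl operator. -/
lemma weyl_apply {n : ℕ} (x : PhS n) (u v : QIdx n) :
    Weyl x u v = Complex.I ^ (∑ j, (x.1 j).val * (x.2 j).val) *
      ((if u = (fun j => bflip (x.1 j) (v j)) then 1 else 0) * ∏ j, zsgn (x.2 j) (v j)) := by
  unfold Weyl
  congr 1
  rw [show (∏ j, (PauliX ^ (ZMod.val (x.1 j)) * PauliZ ^ (ZMod.val (x.2 j))) (u j) (v j))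
      = ∏ j, ((if u j = bflip (x.1 j) (v j) then 1 else 0) * zsgn (x.2 j) (v j)) from
    Finset.prod_congr rfl fun j _ => pauli_entry _ _ _ _]
  rw [Finset.prod_mul_distrib, Finset.prod_boole]
  congr 2
  simp [funext_iff]

/-- Trace formula for `A * Weyl x`. -/
lemma trace_mul_weyl {n : ℕ} (A : Matrix (QIdx n) (QIdx n) ℂ) (x : PhS n) :
    (A * Weyl x).trace = Complex.I ^ (∑ j, (x.1 j).val * (x.2 j).val) *
      ∑ w : QIdx n, A w (fun j => bflip (x.1 j) (w j)) * ∏ j, zsgn (x.2 j) (w j) := by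
  rw [Matrix.trace]
  simp only [Matrix.diag_apply, Matrix.mul_apply, weyl_apply]
  rw [Finset.mul_sum]
  refine Finset.sum_congr rfl fun w _ => ?_
  rw [Finset.sum_eq_single (fun j => bflip (x.1 j) (w j))]
  · simp only [if_pos rfl, if_true]
    ring
  · intro c _ hc
    rw [if_neg hc]
    ring
  · intro h; exact absurd (Finset.mem_univ _) h

/-- Splitting a product over `Fin n` at the threshold `m`. -/
lemma prod_split {M : Type*} [CommMonoid M] {n : ℕ} (m : ℕ) (hm : m ≤ n) (x y : M) :
    ∏ j : Fin n, (if (j : ℕ) < m then x else y) = x ^ m * y ^ (n - m) := by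
  rw [Fin.prod_univ_eq_prod_range (fun k => if k < m then x else y) n,
    Finset.range_eq_Ico, ← Finset.prod_Ico_consecutive _ (Nat.zero_le m) hm]
  rw [show (∏ k ∈ Finset.Ico 0 m, if k < m then x else y) = ∏ k ∈ Finset.Ico 0 m, x from
    Finset.prod_congr rfl fun k hk => if_pos (Finset.mem_Ico.mp hk).2]
  rw [show (∏ k ∈ Finset.Ico m n, if k < m then x else y) = ∏ k ∈ Finset.Ico m n, y from
    Finset.prod_congr rfl fun k hk => if_neg (Nat.not_lt.mpr (Finset.mem_Ico.mp hk).1)]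
  simp [Nat.card_Ico]

lemma prod_if_cond_left {n : ℕ} (m : ℕ) (hm : m ≤ n) (c : Fin n → Prop) [DecidablePred c]
    (z : ℂ) :
    ∏ j : Fin n, (if (j : ℕ) < m then (if c j then z else 0) else 1)
      = if ∀ j : Fin n, (j : ℕ) < m → c j then z ^ m else 0 := by
  by_cases h : ∀ j : Fin n, (j : ℕ) < m → c j
  · rw [if_pos h, show z ^ m = z ^ m * 1 ^ (n - m) from by rw [one_pow, mul_one],
      ← prod_split m hm z 1]
    refine Finset.prod_congr rfl fun j _ => ?_
    by_cases hj : (j : ℕ) < m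
    · rw [if_pos hj, if_pos hj, if_pos (h j hj)]
    · rw [if_neg hj, if_neg hj]
  · rw [if_neg h]
    push_neg at h
    obtain ⟨j, hj, hcj⟩ := h
    exact Finset.prod_eq_zero (Finset.mem_univ j) (by rw [if_pos hj, if_neg hcj])

lemma prod_if_cond_right {n : ℕ} (m : ℕ) (hm : m ≤ n) (c : Fin n → Prop) [DecidablePred c]
    (z : ℂ) :
    ∏ j : Fin n, (if (j : ℕ) < m then 1 else (if c j then z else 0))
      = if ∀ j : Fin n, m ≤ (j : ℕ) → c j then z ^ (n - m) else 0 := by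
  by_cases h : ∀ j : Fin n, m ≤ (j : ℕ) → c j
  · rw [if_pos h, show z ^ (n - m) = 1 ^ m * z ^ (n - m) from by rw [one_pow, one_mul],
      ← prod_split m hm 1 z]
    refine Finset.prod_congr rfl fun j _ => ?_
    by_cases hj : (j : ℕ) < m
    · rw [if_pos hj, if_pos hj]
    · rw [if_neg hj, if_neg hj, if_pos (h j (Nat.not_lt.mp hj))]
  · rw [if_neg h]
    push_neg at h
    obtain ⟨j, hj, hcj⟩ := h
    exact Finset.prod_eq_zero (Finset.mem_univ j)
      (by rw [if_neg (Nat.not_lt.mpr hj), if_neg hcj])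

end Stmt8Aux2

section Stmt8Core

/-- Bit-vectors vanishing on coordinates `< m`. -/
def bvSet (n m : ℕ) : Finset (Fin n → F2) :=
  Fintype.piFinset (fun j => if (j : ℕ) < m then ({0} : Finset F2) else Finset.univ)

/-- Bit-vectors vanishing on coordinates `≥ m`. -/
def bvSet' (n m : ℕ) : Finset (Fin n → F2) :=
  Fintype.piFinset (fun j => if (j : ℕ) < m then (Finset.univ : Finset F2) else {0})

lemma mem_bvSet {n m : ℕ} {p : Fin n → F2} :
    p ∈ bvSet n m ↔ ∀ j : Fin n, (j : ℕ) < m → p j = 0 := by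
  simp only [bvSet, Fintype.mem_piFinset]
  constructor
  · intro h j hj; have := h j; rwa [if_pos hj, Finset.mem_singleton] at this
  · intro h j
    by_cases hj : (j : ℕ) < m
    · rw [if_pos hj, Finset.mem_singleton]; exact h j hj
    · rw [if_neg hj]; exact Finset.mem_univ _

lemma mem_bvSet' {n m : ℕ} {p : Fin n → F2} :
    p ∈ bvSet' n m ↔ ∀ j : Fin n, m ≤ (j : ℕ) → p j = 0 := by
  simp only [bvSet', Fintype.mem_piFinset]
  constructor
  · intro h j hj
    have := h j; rwa [if_neg (Nat.not_lt.mpr hj), Finset.mem_singleton] at this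
  · intro h j
    by_cases hj : (j : ℕ) < m
    · rw [if_pos hj]; exact Finset.mem_univ _
    · rw [if_neg hj, Finset.mem_singleton]; exact h j (Nat.not_lt.mp hj)

lemma bdiff_eq_zero {u v : Fin 2} : bdiff u v = 0 ↔ u = v := by revert u v; decide

lemma mem_Wab {n a b : ℕ} (x : PhS n) :
    x ∈ Wab n a b ↔ ((∀ j : Fin n, (j : ℕ) < n - a → x.1 j = 0) ∧
      ∀ j : Fin n, (j : ℕ) < n - a - b → x.2 j = 0) := Iff.rfl

lemma wab_coe_eq {n a b : ℕ} :
    (Wab n a b : Set (PhS n)) = ↑(bvSet n (n - a) ×ˢ bvSet n (n - a - b)) := by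
  ext x
  rw [SetLike.mem_coe, mem_Wab, Finset.coe_product, Set.mem_prod]
  simp only [Finset.mem_coe, mem_bvSet]

/-- The explicit entrywise formula for the Pauli projection onto `Wab`. -/
noncomputable def Fproj (n a b : ℕ) (A : Matrix (QIdx n) (QIdx n) ℂ) :
    Matrix (QIdx n) (QIdx n) ℂ :=
  fun u v =>
    if ∀ j : Fin n, (j : ℕ) < n - a → u j = v j then
      ((2 : ℂ) ^ (n - a - b))⁻¹ *
        ∑ w ∈ Fintype.piFinset
            (fun j : Fin n => if (j : ℕ) < n - a - b then (Finset.univ : Finset (Fin 2))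
              else {u j}),
          A w (fun j => if (j : ℕ) < n - a - b then w j else v j)
    else 0

lemma single_char (c : F2) (x y : Fin 2) :
    ((-1 : ℂ) ^ (ZMod.val c * ZMod.val (0 : F2)) * (zsgn 0 x * zsgn 0 y)) +
      ((-1 : ℂ) ^ (ZMod.val c * ZMod.val (1 : F2)) * (zsgn 1 x * zsgn 1 y))
      = if x = bflip c y then 2 else 0 := by
  rcases (by revert c; decide : ∀ c : F2, c = 0 ∨ c = 1) c with rfl | rfl <;>
  rcases (by decide : ∀ c : Fin 2, c = 0 ∨ c = 1) x with rfl | rfl <;>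
  rcases (by decide : ∀ c : Fin 2, c = 0 ∨ c = 1) y with rfl | rfl <;>
    simp [zsgn, bflip, ZMod.val_zero, ZMod.val_one] <;> norm_num

lemma char_sum {n : ℕ} (a b : ℕ) (hab : a + b ≤ n) (p : Fin n → F2) (w v : QIdx n) :
    ∑ t ∈ bvSet n (n - a - b),
        ∏ j, ((-1 : ℂ) ^ (ZMod.val (p j) * ZMod.val (t j)) *
          (zsgn (t j) (w j) * zsgn (t j) (v j)))
      = if ∀ j : Fin n, n - a - b ≤ (j : ℕ) → w j = bflip (p j) (v j) then (2 : ℂ) ^ (a + b)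
        else 0 := by
  rw [bvSet, ← Finset.prod_univ_sum
    (fun j : Fin n => if (j : ℕ) < n - a - b then ({0} : Finset F2) else Finset.univ)
    (fun j c => ((-1 : ℂ) ^ (ZMod.val (p j) * ZMod.val c) *
      (zsgn c (w j) * zsgn c (v j))))]
  have key : ∀ j : Fin n,
      (∑ c ∈ (if (j : ℕ) < n - a - b then ({0} : Finset F2) else Finset.univ),
        ((-1 : ℂ) ^ (ZMod.val (p j) * ZMod.val c) * (zsgn c (w j) * zsgn c (v j))))
      = if (j : ℕ) < n - a - b then 1 else (if w j = bflip (p j) (v j) then 2 else 0) := by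
    intro j
    by_cases hj : (j : ℕ) < n - a - b
    · rw [if_pos hj, if_pos hj, Finset.sum_singleton]
      simp [zsgn, ZMod.val_zero]
    · rw [if_neg hj, if_neg hj, F2_sum, single_char]
  rw [Finset.prod_congr rfl fun j _ => key j,
    prod_if_cond_right (n - a - b) (by omega) _ 2,
    show n - (n - a - b) = a + b from by omega]

lemma sum_restrict {n : ℕ} (c : ℕ) (g : Fin n → Fin 2) (f : QIdx n → ℂ) :
    ∑ w : QIdx n, (if ∀ j : Fin n, c ≤ (j : ℕ) → w j = g j then f w else 0)
      = ∑ w ∈ Fintype.piFinset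
          (fun j : Fin n => if (j : ℕ) < c then (Finset.univ : Finset (Fin 2)) else {g j}),
          f w := by
  rw [← Finset.sum_filter]
  congr 1
  ext w
  simp only [Finset.mem_filter, Finset.mem_univ, true_and, Fintype.mem_piFinset]
  constructor
  · intro h j
    by_cases hj : (j : ℕ) < c
    · rw [if_pos hj]; exact Finset.mem_univ _
    · rw [if_neg hj, Finset.mem_singleton]; exact h j (Nat.not_lt.mp hj)
  · intro h j hj
    have := h j; rwa [if_neg (Nat.not_lt.mpr hj), Finset.mem_singleton] at this

end Stmt8Core

section Stmt8ProjEq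

lemma pauliProj_Wab_eq {n : ℕ} (a b : ℕ) (hab : a + b ≤ n)
    (A : Matrix (QIdx n) (QIdx n) ℂ) :
    pauliProj (Wab n a b : Set (PhS n)) A = Fproj n a b A := by
  have hcoef : ((2 : ℂ) ^ n)⁻¹ * (2 : ℂ) ^ (a + b) = ((2 : ℂ) ^ (n - a - b))⁻¹ := by
    rw [show (2 : ℂ) ^ n = 2 ^ (n - a - b) * 2 ^ (a + b) from by
      rw [← pow_add]; congr 1; omega]
    rw [mul_inv]
    field_simp
  ext u v
  rw [pauliProj, wab_coe_eq, finsum_mem_coe_finset, Matrix.smul_apply, Matrix.sum_apply,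
    smul_eq_mul]
  simp only [Matrix.smul_apply, smul_eq_mul]
  rw [Finset.sum_product]
  -- inner sum over the Z-part, for a fixed X-part `p`
  have inner : ∀ p : Fin n → F2,
      (∑ t ∈ bvSet n (n - a - b), (A * Weyl (p, t)).trace * Weyl (p, t) u v)
        = (if u = (fun j => bflip (p j) (v j)) then 1 else 0) *
            ((2 : ℂ) ^ (a + b) *
              ∑ w ∈ Fintype.piFinset
                (fun j : Fin n => if (j : ℕ) < n - a - b then (Finset.univ : Finset (Fin 2))
                  else {bflip (p j) (v j)}),
                A w (fun j => bflip (p j) (w j))) := by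
    intro p
    have hterm : ∀ t ∈ bvSet n (n - a - b),
        (A * Weyl (p, t)).trace * Weyl (p, t) u v
          = ∑ w : QIdx n,
              ((if u = (fun j => bflip (p j) (v j)) then 1 else 0) *
                (A w (fun j => bflip (p j) (w j)) *
                  ∏ j, ((-1 : ℂ) ^ (ZMod.val (p j) * ZMod.val (t j)) *
                    (zsgn (t j) (w j) * zsgn (t j) (v j))))) := by
      intro t _
      rw [trace_mul_weyl, weyl_apply]
      rw [Finset.mul_sum, Finset.sum_mul]
      refine Finset.sum_congr rfl fun w _ => ?_
      have hI : (∏ j, (-1 : ℂ) ^ (ZMod.val (p j) * ZMod.val (t j)))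
          = Complex.I ^ (∑ j, ZMod.val ((p, t).1 j) * ZMod.val ((p, t).2 j)) *
            Complex.I ^ (∑ j, ZMod.val ((p, t).1 j) * ZMod.val ((p, t).2 j)) := by
        rw [← pow_add, ← two_mul, pow_mul, Complex.I_sq,
          Finset.prod_pow_eq_pow_sum]
      rw [Finset.prod_congr rfl
        (fun j _ => mul_comm ((-1 : ℂ) ^ (ZMod.val (p j) * ZMod.val (t j)))
          (zsgn (t j) (w j) * zsgn (t j) (v j))), Finset.prod_mul_distrib,
        Finset.prod_mul_distrib, hI]
      ring
    rw [Finset.sum_congr rfl hterm, Finset.sum_comm]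
    have hw : ∀ w : QIdx n,
        (∑ t ∈ bvSet n (n - a - b),
          ((if u = (fun j => bflip (p j) (v j)) then 1 else 0) *
            (A w (fun j => bflip (p j) (w j)) *
              ∏ j, ((-1 : ℂ) ^ (ZMod.val (p j) * ZMod.val (t j)) *
                (zsgn (t j) (w j) * zsgn (t j) (v j))))))
          = if ∀ j : Fin n, n - a - b ≤ (j : ℕ) → w j = bflip (p j) (v j) then
              ((if u = (fun j => bflip (p j) (v j)) then 1 else 0) * (2 : ℂ) ^ (a + b)) *
                A w (fun j => bflip (p j) (w j))
            else 0 := by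
      intro w
      rw [← Finset.mul_sum, ← Finset.mul_sum, char_sum a b hab p w v]
      rw [mul_ite, mul_ite, mul_zero, mul_zero]
      split_ifs <;> ring
    rw [Finset.sum_congr rfl fun w _ => hw w,
      sum_restrict (n - a - b) (fun j => bflip (p j) (v j))
        (fun w => ((if u = (fun j => bflip (p j) (v j)) then 1 else 0) * (2 : ℂ) ^ (a + b)) *
          A w (fun j => bflip (p j) (w j))), ← Finset.mul_sum]
    ring
  rw [Finset.sum_congr rfl fun p _ => inner p]
  -- collapse the sum over `p`
  have hcond : ∀ p : Fin n → F2,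
      (u = fun j => bflip (p j) (v j)) ↔ p = fun j => bdiff (u j) (v j) := by
    intro p
    rw [funext_iff, funext_iff]
    exact forall_congr' fun j => by rw [eq_comm, bflip_eq_iff]
  have hitem : ∀ p : Fin n → F2,
      ((if u = (fun j => bflip (p j) (v j)) then (1 : ℂ) else 0) *
        ((2 : ℂ) ^ (a + b) *
          ∑ w ∈ Fintype.piFinset
            (fun j : Fin n => if (j : ℕ) < n - a - b then (Finset.univ : Finset (Fin 2))
              else {bflip (p j) (v j)}),
            A w (fun j => bflip (p j) (w j))))
        = if p = (fun j => bdiff (u j) (v j)) then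
            ((2 : ℂ) ^ (a + b) *
              ∑ w ∈ Fintype.piFinset
                (fun j : Fin n => if (j : ℕ) < n - a - b then (Finset.univ : Finset (Fin 2))
                  else {bflip (p j) (v j)}),
                A w (fun j => bflip (p j) (w j)))
          else 0 := by
    intro p
    rw [if_congr (hcond p) rfl rfl, ite_mul, one_mul, zero_mul]
  rw [Finset.sum_congr rfl fun p _ => hitem p, Finset.sum_ite_eq']
  rw [Fproj]
  by_cases hc : ∀ j : Fin n, (j : ℕ) < n - a → u j = v j
  · rw [if_pos hc,
      if_pos (mem_bvSet.mpr fun j hj => bdiff_eq_zero.mpr (hc j hj))]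
    have hfs : (fun j : Fin n => if (j : ℕ) < n - a - b then (Finset.univ : Finset (Fin 2))
          else {bflip (bdiff (u j) (v j)) (v j)})
        = fun j : Fin n => if (j : ℕ) < n - a - b then (Finset.univ : Finset (Fin 2))
          else {u j} := by
      funext j; rw [bflip_bdiff]
    rw [hfs]
    have hsum : ∀ w ∈ Fintype.piFinset
        (fun j : Fin n => if (j : ℕ) < n - a - b then (Finset.univ : Finset (Fin 2))
          else {u j}),
        A w (fun j => bflip (bdiff (u j) (v j)) (w j))
          = A w (fun j => if (j : ℕ) < n - a - b then w j else v j) := by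
      intro w hw
      congr 1
      funext j
      by_cases hj : (j : ℕ) < n - a - b
      · rw [if_pos hj, show u j = v j from hc j (by omega), bdiff_eq_zero.mpr rfl]
        rfl
      · have hwj : w j = u j := by
          have := Fintype.mem_piFinset.mp hw j
          rwa [if_neg hj, Finset.mem_singleton] at this
        rw [if_neg hj, hwj, bflip_bdiff']
    rw [Finset.sum_congr rfl hsum, ← mul_assoc, hcoef]
  · rw [if_neg hc, if_neg (fun hmem => hc fun j hj =>
      bdiff_eq_zero.mp (mem_bvSet.mp hmem j hj)), mul_zero]

end Stmt8ProjEq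

section Stmt8BlockDiag

lemma Fproj_blockDiag {n a b : ℕ} (hab : a + b ≤ n) {V : Matrix (QIdx n) (QIdx n) ℂ}
    (hV : IsBlockDiag a b hab V) : Fproj n a b V = V := by
  obtain ⟨M, hM⟩ := hV
  ext u v
  rw [Fproj]
  by_cases hc : ∀ j : Fin n, (j : ℕ) < n - a → u j = v j
  · rw [if_pos hc]
    have hterm : ∀ w ∈ Fintype.piFinset
        (fun j : Fin n => if (j : ℕ) < n - a - b then (Finset.univ : Finset (Fin 2))
          else {u j}),
        V w (fun j => if (j : ℕ) < n - a - b then w j else v j) = V u v := by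
      intro w hw
      have hwj : ∀ j : Fin n, ¬((j : ℕ) < n - a - b) → w j = u j := by
        intro j hj
        have := Fintype.mem_piFinset.mp hw j
        rwa [if_neg hj, Finset.mem_singleton] at this
      rw [hM, hM u v, if_pos hc, if_pos ?_]
      · congr 1
        · funext i
          exact hwj ⟨n - a - b + i.1, by have := i.2; omega⟩
            (show ¬ n - a - b + i.1 < n - a - b by omega)
        · funext i
          exact hwj ⟨n - a + i.1, by have := i.2; omega⟩
            (show ¬ n - a + i.1 < n - a - b by omega)
        · funext i
          exact if_neg (show ¬ n - a + i.1 < n - a - b by omega)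
      · intro j hj
        by_cases hjc : (j : ℕ) < n - a - b
        · rw [if_pos hjc]
        · rw [if_neg hjc, hwj j hjc]
          exact hc j hj
    rw [Finset.sum_congr rfl hterm, Finset.sum_const, Fintype.card_piFinset]
    have hcard : (∏ j : Fin n,
        ((if (j : ℕ) < n - a - b then (Finset.univ : Finset (Fin 2)) else {u j}).card))
        = 2 ^ (n - a - b) := by
      rw [show (fun j : Fin n =>
          ((if (j : ℕ) < n - a - b then (Finset.univ : Finset (Fin 2)) else {u j}).card))
          = fun j : Fin n => if (j : ℕ) < n - a - b then 2 else 1 from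
        funext fun j => by
          split_ifs <;> simp]
      rw [prod_split (n - a - b) (by omega) 2 1, one_pow, mul_one]
    rw [hcard, nsmul_eq_mul, Nat.cast_pow, Nat.cast_ofNat, ← mul_assoc,
      inv_mul_cancel₀ (pow_ne_zero _ two_ne_zero), one_mul]
  · rw [if_neg hc, hM u v, if_neg hc]

lemma Fproj_sub {n a b : ℕ} (A B : Matrix (QIdx n) (QIdx n) ℂ) :
    Fproj n a b (A - B) = Fproj n a b A - Fproj n a b B := by
  ext u v
  simp only [Fproj, Matrix.sub_apply]
  split_ifs with hc
  · rw [Finset.sum_sub_distrib, mul_sub]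
  · rw [sub_zero]

end Stmt8BlockDiag

section Stmt8Twirl

/-- The unitary `D_t · X_s` (diagonal sign times bit-flip permutation). -/
noncomputable def twirlB {n : ℕ} (t s : Fin n → F2) : Matrix (QIdx n) (QIdx n) ℂ :=
  fun u w => (∏ j, zsgn (t j) (u j)) * (if u = (fun j => bflip (s j) (w j)) then 1 else 0)

lemma zsgn_star (c : F2) (v : Fin 2) : star (zsgn c v) = zsgn c v := by
  unfold zsgn; split <;> simp

lemma twirlB_star_apply {n : ℕ} (t s : Fin n → F2) (u w : QIdx n) :
    star (twirlB t s u w) = twirlB t s u w := by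
  unfold twirlB
  rw [star_mul', star_prod]
  simp only [zsgn_star]
  rw [apply_ite star, star_one, star_zero, mul_comm]

lemma vec_bflip_comm {n : ℕ} (s : Fin n → F2) (u w : QIdx n) :
    (u = fun j => bflip (s j) (w j)) ↔ (w = fun j => bflip (s j) (u j)) := by
  constructor <;> (rintro rfl; funext j; rw [bflip_involutive])

lemma vec_bflip_inj {n : ℕ} (s : Fin n → F2) {u v : QIdx n}
    (h : (fun j => bflip (s j) (u j)) = fun j => bflip (s j) (v j)) : u = v := by
  funext j
  have := congrFun h j
  rw [← bflip_involutive (s j) (u j), this, bflip_involutive]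

lemma prod_zsgn_sq {n : ℕ} (t : Fin n → F2) (u : QIdx n) :
    (∏ j, zsgn (t j) (u j)) * (∏ j, zsgn (t j) (u j)) = 1 := by
  rw [← Finset.prod_mul_distrib]
  exact Finset.prod_eq_one fun j _ => zsgn_mul_self _ _

lemma twirlB_mem_unitary {n : ℕ} (t s : Fin n → F2) :
    twirlB t s ∈ Matrix.unitaryGroup (QIdx n) ℂ := by
  rw [Matrix.mem_unitaryGroup_iff]
  ext u v
  rw [Matrix.mul_apply, Matrix.one_apply]
  have hterm : ∀ w : QIdx n,
      twirlB t s u w * (star (twirlB t s)) w v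
        = if w = (fun j => bflip (s j) (u j)) then (if u = v then 1 else 0) else 0 := by
    intro w
    rw [Matrix.star_apply, twirlB_star_apply]
    unfold twirlB
    rw [if_congr (vec_bflip_comm s u w) rfl rfl, if_congr (vec_bflip_comm s v w) rfl rfl]
    by_cases h1 : w = fun j => bflip (s j) (u j)
    · by_cases h3 : u = v
      · subst h3
        simp only [h1, eq_self_iff_true, if_true, mul_one]
        exact prod_zsgn_sq t u
      · have hne : ¬((fun j => bflip (s j) (u j)) = fun j => bflip (s j) (v j)) :=
          fun hh => h3 (vec_bflip_inj s hh)
        simp only [h1, eq_self_iff_true, if_true, if_neg hne, if_neg h3, mul_one, mul_zero]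
    · simp only [if_neg h1]
      ring
  rw [Finset.sum_congr rfl fun w _ => hterm w, Finset.sum_ite_eq'
    Finset.univ (fun j => bflip (s j) (u j)) (fun _ => if u = v then (1 : ℂ) else 0),
    if_pos (Finset.mem_univ _)]

lemma twirl_conj_apply {n : ℕ} (t s : Fin n → F2) (A : Matrix (QIdx n) (QIdx n) ℂ)
    (u v : QIdx n) :
    (twirlB t s * A * (twirlB t s)ᴴ) u v
      = ((∏ j, zsgn (t j) (u j)) * (∏ j, zsgn (t j) (v j))) *
          A (fun j => bflip (s j) (u j)) (fun j => bflip (s j) (v j)) := by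
  rw [Matrix.mul_apply]
  have hterm : ∀ w : QIdx n,
      (twirlB t s * A) u w * (twirlB t s)ᴴ w v
        = if w = (fun j => bflip (s j) (v j)) then
            (twirlB t s * A) u w * (∏ j, zsgn (t j) (v j)) else 0 := by
    intro w
    rw [Matrix.conjTranspose_apply, twirlB_star_apply]
    show _ * ((∏ j, zsgn (t j) (v j)) * (if v = (fun j => bflip (s j) (w j)) then 1 else 0)) = _
    rw [if_congr (vec_bflip_comm s v w) rfl rfl]
    split_ifs <;> ring
  rw [Finset.sum_congr rfl fun w _ => hterm w, Finset.sum_ite_eq' Finset.univ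
    (fun j => bflip (s j) (v j))
    (fun w => (twirlB t s * A) u w * (∏ j, zsgn (t j) (v j))), if_pos (Finset.mem_univ _)]
  rw [Matrix.mul_apply]
  have hterm2 : ∀ w : QIdx n,
      twirlB t s u w * A w (fun j => bflip (s j) (v j))
        = if w = (fun j => bflip (s j) (u j)) then
            (∏ j, zsgn (t j) (u j)) * A w (fun j => bflip (s j) (v j)) else 0 := by
    intro w
    unfold twirlB
    rw [if_congr (vec_bflip_comm s u w) rfl rfl]
    split_ifs <;> ring
  rw [Finset.sum_congr rfl fun w _ => hterm2 w, Finset.sum_ite_eq' Finset.univ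
    (fun j => bflip (s j) (u j))
    (fun w => (∏ j, zsgn (t j) (u j)) * A w (fun j => bflip (s j) (v j))),
    if_pos (Finset.mem_univ _)]
  ring

lemma single_char0 (x y : Fin 2) :
    (zsgn 0 x * zsgn 0 y) + (zsgn 1 x * zsgn 1 y) = if x = y then 2 else 0 := by
  fin_cases x <;> fin_cases y <;> simp [zsgn] <;> norm_num

lemma zsgn_char_sum {n : ℕ} (m : ℕ) (hm : m ≤ n) (u v : QIdx n) :
    ∑ t ∈ bvSet' n m, ((∏ j, zsgn (t j) (u j)) * (∏ j, zsgn (t j) (v j)))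
      = if ∀ j : Fin n, (j : ℕ) < m → u j = v j then (2 : ℂ) ^ m else 0 := by
  have : ∀ t : Fin n → F2, ((∏ j, zsgn (t j) (u j)) * (∏ j, zsgn (t j) (v j)))
      = ∏ j, (zsgn (t j) (u j) * zsgn (t j) (v j)) := fun t =>
    (Finset.prod_mul_distrib).symm
  rw [Finset.sum_congr rfl fun t _ => this t, bvSet',
    ← Finset.prod_univ_sum
      (fun j : Fin n => if (j : ℕ) < m then (Finset.univ : Finset F2) else {0})
      (fun j c => zsgn c (u j) * zsgn c (v j))]
  have key : ∀ j : Fin n,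
      (∑ c ∈ (if (j : ℕ) < m then (Finset.univ : Finset F2) else {0}),
        (zsgn c (u j) * zsgn c (v j)))
      = if (j : ℕ) < m then (if u j = v j then 2 else 0) else 1 := by
    intro j
    by_cases hj : (j : ℕ) < m
    · rw [if_pos hj, if_pos hj, F2_sum, single_char0]
    · rw [if_neg hj, if_neg hj, Finset.sum_singleton]
      simp [zsgn]
  rw [Finset.prod_congr rfl fun j _ => key j, prod_if_cond_left m hm _ 2]

lemma bvSet'_card {n m : ℕ} (hm : m ≤ n) : (bvSet' n m).card = 2 ^ m := by
  rw [bvSet', Fintype.card_piFinset]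
  rw [show (fun j : Fin n =>
      ((if (j : ℕ) < m then (Finset.univ : Finset F2) else {0}).card))
      = fun j : Fin n => if (j : ℕ) < m then 2 else 1 from
    funext fun j => by split_ifs <;> simp [F2_univ]]
  rw [prod_split m hm 2 1, one_pow, mul_one]

lemma Fproj_eq_twirl {n : ℕ} (a b : ℕ) (hab : a + b ≤ n)
    (A : Matrix (QIdx n) (QIdx n) ℂ) :
    Fproj n a b A = ((2 : ℂ) ^ ((n - a) + (n - a - b)))⁻¹ •
      ∑ t ∈ bvSet' n (n - a), ∑ s ∈ bvSet' n (n - a - b),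
        twirlB t s * A * (twirlB t s)ᴴ := by
  ext u v
  rw [Matrix.smul_apply, smul_eq_mul, Matrix.sum_apply]
  simp only [Matrix.sum_apply, twirl_conj_apply]
  rw [← Finset.sum_mul_sum (bvSet' n (n - a)) (bvSet' n (n - a - b))
    (fun t => ((∏ j, zsgn (t j) (u j)) * (∏ j, zsgn (t j) (v j))))
    (fun s => A (fun j => bflip (s j) (u j)) (fun j => bflip (s j) (v j)))]
  rw [zsgn_char_sum (n - a) (by omega) u v, Fproj]
  by_cases hc : ∀ j : Fin n, (j : ℕ) < n - a → u j = v j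
  · rw [if_pos hc, if_pos hc]
    have hbij : (∑ s ∈ bvSet' n (n - a - b),
        A (fun j => bflip (s j) (u j)) (fun j => bflip (s j) (v j)))
        = ∑ w ∈ Fintype.piFinset
            (fun j : Fin n => if (j : ℕ) < n - a - b then (Finset.univ : Finset (Fin 2))
              else {u j}),
            A w (fun j => if (j : ℕ) < n - a - b then w j else v j) := by
      refine Finset.sum_nbij' (fun s => fun j => bflip (s j) (u j))
        (fun w => fun j => bdiff (w j) (u j)) ?_ ?_ ?_ ?_ ?_
      · intro s hs
        rw [Fintype.mem_piFinset]
        intro j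
        by_cases hj : (j : ℕ) < n - a - b
        · rw [if_pos hj]; exact Finset.mem_univ _
        · rw [if_neg hj, Finset.mem_singleton]
          show bflip (s j) (u j) = u j
          rw [mem_bvSet'.mp hs j (Nat.not_lt.mp hj), bflip_zero]
      · intro w hw
        rw [mem_bvSet']
        intro j hj
        have hthis := Fintype.mem_piFinset.mp hw j
        rw [if_neg (Nat.not_lt.mpr hj), Finset.mem_singleton] at hthis
        show bdiff (w j) (u j) = 0
        exact bdiff_eq_zero.mpr hthis
      · intro s _
        funext j
        show bdiff (bflip (s j) (u j)) (u j) = s j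
        rw [bdiff_bflip]
      · intro w _
        funext j
        show bflip (bdiff (w j) (u j)) (u j) = w j
        rw [bflip_bdiff]
      · intro s hs
        congr 1
        funext j
        show bflip (s j) (v j) = if (j : ℕ) < n - a - b then bflip (s j) (u j) else v j
        by_cases hj : (j : ℕ) < n - a - b
        · rw [if_pos hj, show u j = v j from hc j (by omega)]
        · rw [if_neg hj, mem_bvSet'.mp hs j (Nat.not_lt.mp hj), bflip_zero]
    rw [hbij, ← mul_assoc]
    congr 1
    rw [pow_add, mul_inv, mul_right_comm, inv_mul_cancel₀ (pow_ne_zero _ two_ne_zero),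
      one_mul]
  · rw [if_neg hc, if_neg hc, zero_mul, mul_zero]

end Stmt8Twirl

section Stmt8Norm

open scoped Matrix.Norms.L2Operator

lemma norm_twirl_conj {n : ℕ} (t s : Fin n → F2) (A : Matrix (QIdx n) (QIdx n) ℂ) :
    ‖twirlB t s * A * (twirlB t s)ᴴ‖ = ‖A‖ := by
  have hB := twirlB_mem_unitary t s
  rw [mul_assoc, CStarRing.norm_mem_unitary_mul (A * (twirlB t s)ᴴ) hB,
    ← Matrix.star_eq_conjTranspose, CStarRing.norm_mul_mem_unitary A (Unitary.star_mem hB)]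

lemma norm_Fproj_le {n : ℕ} (a b : ℕ) (hab : a + b ≤ n) (A : Matrix (QIdx n) (QIdx n) ℂ) :
    ‖Fproj n a b A‖ ≤ ‖A‖ := by
  rw [Fproj_eq_twirl a b hab A, norm_smul]
  have h2 : ‖∑ t ∈ bvSet' n (n - a), ∑ s ∈ bvSet' n (n - a - b),
      twirlB t s * A * (twirlB t s)ᴴ‖
      ≤ ((2 : ℝ) ^ (n - a) * (2 : ℝ) ^ (n - a - b)) * ‖A‖ := by
    refine le_trans (norm_sum_le _ _) ?_
    have hinner : ∀ t ∈ bvSet' n (n - a),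
        ‖∑ s ∈ bvSet' n (n - a - b), twirlB t s * A * (twirlB t s)ᴴ‖
          ≤ ((2 : ℝ) ^ (n - a - b)) * ‖A‖ := by
      intro t _
      refine le_trans (norm_sum_le _ _) ?_
      rw [Finset.sum_congr rfl (fun s _ => norm_twirl_conj t s A), Finset.sum_const,
        bvSet'_card (show n - a - b ≤ n by omega), nsmul_eq_mul]
      push_cast
      exact le_rfl
    refine le_trans (Finset.sum_le_sum hinner) ?_
    rw [Finset.sum_const, bvSet'_card (show n - a ≤ n by omega), nsmul_eq_mul]
    push_cast
    rw [mul_assoc]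
  refine le_trans (mul_le_mul_of_nonneg_left h2 (norm_nonneg _)) ?_
  rw [show ‖((2 : ℂ) ^ ((n - a) + (n - a - b)))⁻¹‖ = ((2 : ℝ) ^ ((n - a) + (n - a - b)))⁻¹ from
    by rw [norm_inv, norm_pow]; norm_num]
  rw [pow_add, ← mul_assoc, inv_mul_cancel₀ (by positivity), one_mul]

end Stmt8Norm

open scoped Matrix.Norms.L2Operator

theorem stmt8 (a b n : ℕ) (hab : a + b ≤ n) (ε : ℝ) (hε : 0 ≤ ε)
    (U : Matrix (QIdx n) (QIdx n) ℂ) (hU : U ∈ Matrix.unitaryGroup (QIdx n) ℂ)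
    (h : ∃ V : Matrix (QIdx n) (QIdx n) ℂ,
      IsBlockDiag a b hab V ∧ V ∈ Matrix.unitaryGroup (QIdx n) ℂ ∧ l2OpNorm (U - V) ≤ ε) :
    l2OpNorm (U - pauliProj (Wab n a b : Set (PhS n)) U) ≤ 2 * ε := by
  obtain ⟨V, hVbd, hVu, hVn⟩ := h
  rw [pauliProj_Wab_eq a b hab U]
  have hre : U - Fproj n a b U = (U - V) - Fproj n a b (U - V) := by
    rw [Fproj_sub, Fproj_blockDiag hab hVbd]
    abel
  rw [hre]
  have e : ∀ M : Matrix (QIdx n) (QIdx n) ℂ, l2OpNorm M = ‖M‖ := fun _ => rfl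
  rw [e] at hVn ⊢
  calc ‖U - V - Fproj n a b (U - V)‖ ≤ ‖U - V‖ + ‖Fproj n a b (U - V)‖ := norm_sub_le _ _
    _ ≤ ε + ε := add_le_add hVn (le_trans (norm_Fproj_le a b hab (U - V)) hVn)
    _ = 2 * ε := by ring

end PauliSpec
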